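/- Let U, V ∈ ℝ^{d×K} have orthonormal columns with ‖UUᵀ − VVᵀ‖₂ < 1, and let Ĥ = sgn(VᵀU). Then (1/√2)‖UUᵀ − VVᵀ‖_F ≤ ‖VĤ − U‖_F ≤ ‖UUᵀ − VVᵀ‖_F / √(2 − ‖UUᵀ − VVᵀ‖₂²). -/

import Mathlib

open Matrix BigOperators

/-- Squared Frobenius norm of a real matrix. -/
noncomputable def frobSq {m n : Type*} [Fintype m] [Fintype n] (A : Matrix m n ℝ) : ℝ :=
  ∑ i, ∑ j, (A i j) ^ 2

/-- Frobenius norm of a real matrix. -/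
noncomputable def frob {m n : Type*} [Fintype m] [Fintype n] (A : Matrix m n ℝ) : ℝ :=
  Real.sqrt (frobSq A)

/-- Spectral norm (ℓ² operator norm) of a real matrix. -/
noncomputable def specNorm {m n : Type*} [Fintype m] [Fintype n] [DecidableEq n]
    (A : Matrix m n ℝ) : ℝ :=
  ‖LinearMap.toContinuousLinearMap (Matrix.toEuclideanLin A)‖

lemma frobSq_eq_trace {m n : Type*} [Fintype m] [Fintype n] (A : Matrix m n ℝ) :
    frobSq A = (Aᵀ * A).trace := by
  simp [frobSq, Matrix.trace, Matrix.diag, Matrix.mul_apply, sq]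
  exact Finset.sum_comm

lemma dot_mulVec_mulVec {d m n : Type*} [Fintype d] [Fintype m] [Fintype n]
    (A : Matrix d m ℝ) (B : Matrix d n ℝ) (x : m → ℝ) (y : n → ℝ) :
    (A *ᵥ x) ⬝ᵥ (B *ᵥ y) = x ⬝ᵥ ((Aᵀ * B) *ᵥ y) := by
  rw [← Matrix.mulVec_mulVec, Matrix.dotProduct_mulVec x Aᵀ, Matrix.vecMul_transpose]

lemma mulVec_col {m n p : Type*} [Fintype m] [Fintype n] [Fintype p]
    (A : Matrix m n ℝ) (B : Matrix n p ℝ) (j : p) :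
    A *ᵥ (fun i => B i j) = fun k => (A * B) k j := by
  funext k
  simp [mulVec, dotProduct, Matrix.mul_apply]

lemma dot_mulVec_le {m n : Type*} [Fintype m] [Fintype n] [DecidableEq n]
    (A : Matrix m n ℝ) (x : n → ℝ) :
    (A *ᵥ x) ⬝ᵥ (A *ᵥ x) ≤ specNorm A ^ 2 * (x ⬝ᵥ x) := by
  set y : EuclideanSpace ℝ n := (WithLp.equiv 2 (n → ℝ)).symm x with hy
  have h1 : ‖LinearMap.toContinuousLinearMap (Matrix.toEuclideanLin A) y‖ ≤ specNorm A * ‖y‖ :=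
    (LinearMap.toContinuousLinearMap (Matrix.toEuclideanLin A)).le_opNorm y
  have h2 : LinearMap.toContinuousLinearMap (Matrix.toEuclideanLin A) y
      = (WithLp.equiv 2 (m → ℝ)).symm (A *ᵥ x) := by
    rw [LinearMap.coe_toContinuousLinearMap', hy]
    exact Matrix.toEuclideanLin_apply_piLp_toLp A x
  have hnsn : ‖(WithLp.equiv 2 (n → ℝ)).symm x‖ ^ 2 = x ⬝ᵥ x := by
    rw [EuclideanSpace.norm_eq, Real.sq_sqrt (Finset.sum_nonneg fun i _ => sq_nonneg _)]
    simp [dotProduct, sq]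
  have hnsm : ‖(WithLp.equiv 2 (m → ℝ)).symm (A *ᵥ x)‖ ^ 2 = (A *ᵥ x) ⬝ᵥ (A *ᵥ x) := by
    rw [EuclideanSpace.norm_eq, Real.sq_sqrt (Finset.sum_nonneg fun i _ => sq_nonneg _)]
    simp [dotProduct, sq]
  calc (A *ᵥ x) ⬝ᵥ (A *ᵥ x) = ‖(WithLp.equiv 2 (m → ℝ)).symm (A *ᵥ x)‖ ^ 2 := hnsm.symm
    _ ≤ (specNorm A * ‖y‖) ^ 2 := by
        rw [← h2]; exact pow_le_pow_left₀ (norm_nonneg _) h1 2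
    _ = specNorm A ^ 2 * (x ⬝ᵥ x) := by rw [mul_pow, hy, hnsn]

lemma dot_cauchy {n : Type*} [Fintype n] (x y : n → ℝ) :
    x ⬝ᵥ y ≤ Real.sqrt (x ⬝ᵥ x) * Real.sqrt (y ⬝ᵥ y) := by
  have := real_inner_le_norm ((WithLp.equiv 2 (n → ℝ)).symm x) ((WithLp.equiv 2 (n → ℝ)).symm y)
  rw [EuclideanSpace.norm_eq, EuclideanSpace.norm_eq] at this
  simpa [PiLp.inner_apply, dotProduct, sq, Real.norm_eq_abs, abs_mul_abs_self, mul_comm] using this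

/-- Let `U, V ∈ ℝ^{d×K}` have orthonormal columns with `‖UUᵀ − VVᵀ‖₂ < 1`, and let
`Ĥ = sgn(VᵀU)` (given through an SVD `VᵀU = P diag(σ) Qᵀ`).  Then
`(1/√2)‖UUᵀ − VVᵀ‖_F ≤ ‖VĤ − U‖_F ≤ ‖UUᵀ − VVᵀ‖_F / √(2 − ‖UUᵀ − VVᵀ‖₂²)`. -/
theorem frob_Vsign_sandwich {d K : ℕ} (U V : Matrix (Fin d) (Fin K) ℝ)
    (hU : Uᵀ * U = 1) (hV : Vᵀ * V = 1)
    (P Q : Matrix (Fin K) (Fin K) ℝ) (σ : Fin K → ℝ)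
    (hP : Pᵀ * P = 1) (hQ : Qᵀ * Q = 1) (hσ0 : ∀ j, 0 ≤ σ j)
    (hSVD : Vᵀ * U = P * Matrix.diagonal σ * Qᵀ)
    (Hhat : Matrix (Fin K) (Fin K) ℝ)
    (hHhat : Hhat = P * Matrix.diagonal (fun j => if 0 < σ j then (1 : ℝ) else 0) * Qᵀ)
    (hlt : specNorm (U * Uᵀ - V * Vᵀ) < 1) :
    (1 / Real.sqrt 2) * frob (U * Uᵀ - V * Vᵀ) ≤ frob (V * Hhat - U) ∧
    frob (V * Hhat - U) ≤
      frob (U * Uᵀ - V * Vᵀ) / Real.sqrt (2 - specNorm (U * Uᵀ - V * Vᵀ) ^ 2) := by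
  have hUV : Uᵀ * V = Q * Matrix.diagonal σ * Pᵀ := by
    have h := congrArg Matrix.transpose hSVD
    simpa [Matrix.transpose_mul, Matrix.diagonal_transpose, Matrix.mul_assoc] using h
  set ε := specNorm (U * Uᵀ - V * Vᵀ) with hε
  have hεnn : (0 : ℝ) ≤ ε := norm_nonneg _
  -- Spectral facts: 1 - σ j ^ 2 ≤ ε ^ 2 and σ j ≤ 1.
  have key : ∀ j, 1 - σ j ^ 2 ≤ ε ^ 2 ∧ σ j ≤ 1 := by
    intro j
    set A := U * Uᵀ - V * Vᵀ with hA
    set q : Fin K → ℝ := fun i => Q i j with hq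
    set p : Fin K → ℝ := fun i => P i j with hp
    have hqq : q ⬝ᵥ q = 1 := by
      have h1 : q ⬝ᵥ q = (Qᵀ * Q) j j := by
        simp [dotProduct, Matrix.mul_apply, hq]
      rw [h1, hQ, Matrix.one_apply_eq]
    have hpp : p ⬝ᵥ p = 1 := by
      have h1 : p ⬝ᵥ p = (Pᵀ * P) j j := by
        simp [dotProduct, Matrix.mul_apply, hp]
      rw [h1, hP, Matrix.one_apply_eq]
    have hMq : (Vᵀ * U) *ᵥ q = σ j • p := by
      rw [hSVD, hq, mulVec_col]
      funext k
      have h2 : P * Matrix.diagonal σ * Qᵀ * Q = P * Matrix.diagonal σ := by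
        rw [Matrix.mul_assoc, hQ, Matrix.mul_one]
      rw [h2]
      simp [Matrix.mul_diagonal, hp, mul_comm]
    have hMp : (Uᵀ * V) *ᵥ p = σ j • q := by
      rw [hUV, hp, mulVec_col]
      funext k
      have h2 : Q * Matrix.diagonal σ * Pᵀ * P = Q * Matrix.diagonal σ := by
        rw [Matrix.mul_assoc, hP, Matrix.mul_one]
      rw [h2]
      simp [Matrix.mul_diagonal, hq, mul_comm]
    set x := U *ᵥ q with hx
    have hxx : x ⬝ᵥ x = 1 := by
      rw [hx, dot_mulVec_mulVec, hU, Matrix.one_mulVec, hqq]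
    have hVpVp : (V *ᵥ p) ⬝ᵥ (V *ᵥ p) = 1 := by
      rw [dot_mulVec_mulVec, hV, Matrix.one_mulVec, hpp]
    have hxVp : x ⬝ᵥ (V *ᵥ p) = σ j := by
      rw [hx, dot_mulVec_mulVec, hMp, dotProduct_smul, hqq, smul_eq_mul, mul_one]
    have hVpx : (V *ᵥ p) ⬝ᵥ x = σ j := by rw [dotProduct_comm]; exact hxVp
    have hσle : σ j ≤ 1 := by
      have h := dot_cauchy x (V *ᵥ p)
      rw [hxVp, hxx, hVpVp, Real.sqrt_one, mul_one] at h
      exact h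
    have hAx : A *ᵥ x = x - σ j • (V *ᵥ p) := by
      have h2 : A * U = U - V * (Vᵀ * U) := by
        rw [hA, Matrix.sub_mul, Matrix.mul_assoc, Matrix.mul_assoc, hU, Matrix.mul_one]
      rw [hx, Matrix.mulVec_mulVec, h2, Matrix.sub_mulVec, ← Matrix.mulVec_mulVec,
        hMq, Matrix.mulVec_smul]
    have hexps : (A *ᵥ x) ⬝ᵥ (A *ᵥ x) = 1 - σ j ^ 2 := by
      rw [hAx]
      simp only [sub_dotProduct, dotProduct_sub, smul_dotProduct,
        dotProduct_smul, hxx, hVpVp, hxVp, hVpx, smul_eq_mul]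
      ring
    have hbound := dot_mulVec_le A x
    rw [hxx, mul_one, hexps] at hbound
    exact ⟨hbound, hσle⟩
  have hsin : ∀ j, 1 - σ j ^ 2 ≤ ε ^ 2 := fun j => (key j).1
  have hσle : ∀ j, σ j ≤ 1 := fun j => (key j).2
  have hpos : ∀ j, 0 < σ j := by
    intro j
    rcases lt_or_eq_of_le (hσ0 j) with h | h
    · exact h
    · exfalso
      have h1 := hsin j
      rw [← h] at h1
      nlinarith [hεnn, hlt]
  have hH : Hhat = P * Qᵀ := by
    rw [hHhat]
    have h1 : (fun j => if 0 < σ j then (1 : ℝ) else 0) = fun _ => 1 :=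
      funext fun j => if_pos (hpos j)
    rw [h1, Matrix.diagonal_one, Matrix.mul_one]
  -- cancellation helpers
  have cP : ∀ {r : Type} [Fintype r] (X : Matrix (Fin K) r ℝ), Pᵀ * (P * X) = X := fun X => by
    rw [← Matrix.mul_assoc, hP, Matrix.one_mul]
  have cU : ∀ {r : Type} [Fintype r] (X : Matrix (Fin K) r ℝ), Uᵀ * (U * X) = X := fun X => by
    rw [← Matrix.mul_assoc, hU, Matrix.one_mul]
  have cV : ∀ {r : Type} [Fintype r] (X : Matrix (Fin K) r ℝ), Vᵀ * (V * X) = X := fun X => by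
    rw [← Matrix.mul_assoc, hV, Matrix.one_mul]
  have tQDQ : ∀ (τ : Fin K → ℝ), (Q * (Matrix.diagonal τ * Qᵀ)).trace = ∑ j, τ j := by
    intro τ
    rw [Matrix.trace_mul_comm, Matrix.mul_assoc, hQ, Matrix.mul_one, Matrix.trace_diagonal]
  -- Frobenius norm computations
  have hF1 : frobSq (V * Hhat - U) = 2 * (K : ℝ) - 2 * ∑ j, σ j := by
    have t1 : ((Hhatᵀ * Vᵀ) * (V * Hhat)).trace = (K : ℝ) := by
      rw [hH]
      simp only [Matrix.transpose_mul, Matrix.transpose_transpose, Matrix.mul_assoc, cV, cP]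
      rw [Matrix.trace_mul_comm, hQ, Matrix.trace_one]
      simp
    have t2 : ((Hhatᵀ * Vᵀ) * U).trace = ∑ j, σ j := by
      rw [hH]
      simp only [Matrix.transpose_mul, Matrix.transpose_transpose, Matrix.mul_assoc]
      rw [hSVD]
      simp only [Matrix.mul_assoc, cP]
      exact tQDQ σ
    have t3 : (Uᵀ * (V * Hhat)).trace = ∑ j, σ j := by
      rw [hH, ← Matrix.mul_assoc, hUV]
      simp only [Matrix.mul_assoc, cP]
      exact tQDQ σ
    have t4 : (Uᵀ * U).trace = (K : ℝ) := by rw [hU, Matrix.trace_one]; simp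
    rw [frobSq_eq_trace]
    have hexp : (V * Hhat - U)ᵀ * (V * Hhat - U)
        = (Hhatᵀ * Vᵀ) * (V * Hhat) - (Hhatᵀ * Vᵀ) * U - (Uᵀ * (V * Hhat) - Uᵀ * U) := by
      rw [Matrix.transpose_sub, Matrix.transpose_mul, Matrix.sub_mul, Matrix.mul_sub,
        Matrix.mul_sub]
    rw [hexp, Matrix.trace_sub, Matrix.trace_sub, Matrix.trace_sub, t1, t2, t3, t4]
    ring
  have hF2 : frobSq (U * Uᵀ - V * Vᵀ) = 2 * (K : ℝ) - 2 * ∑ j, σ j ^ 2 := by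
    rw [frobSq_eq_trace]
    have hsymm : (U * Uᵀ - V * Vᵀ)ᵀ = U * Uᵀ - V * Vᵀ := by
      simp [Matrix.transpose_sub, Matrix.transpose_mul]
    rw [hsymm]
    have hexp : (U * Uᵀ - V * Vᵀ) * (U * Uᵀ - V * Vᵀ)
        = (U * Uᵀ) * (U * Uᵀ) - (U * Uᵀ) * (V * Vᵀ)
          - ((V * Vᵀ) * (U * Uᵀ) - (V * Vᵀ) * (V * Vᵀ)) := by
      rw [Matrix.sub_mul, Matrix.mul_sub, Matrix.mul_sub]
    have s1 : ((U * Uᵀ) * (U * Uᵀ)).trace = (K : ℝ) := by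
      simp only [Matrix.mul_assoc, cU]
      rw [Matrix.trace_mul_comm, hU, Matrix.trace_one]; simp
    have s4 : ((V * Vᵀ) * (V * Vᵀ)).trace = (K : ℝ) := by
      simp only [Matrix.mul_assoc, cV]
      rw [Matrix.trace_mul_comm, hV, Matrix.trace_one]; simp
    have s2 : ((U * Uᵀ) * (V * Vᵀ)).trace = ∑ j, σ j ^ 2 := by
      have e : (U * Uᵀ) * (V * Vᵀ) = U * ((Uᵀ * V) * Vᵀ) := by
        simp only [Matrix.mul_assoc]
      rw [e, Matrix.trace_mul_comm, Matrix.mul_assoc, hUV, hSVD]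
      simp only [Matrix.mul_assoc, cP]
      rw [← Matrix.mul_assoc (Matrix.diagonal σ) (Matrix.diagonal σ), Matrix.diagonal_mul_diagonal]
      rw [tQDQ]
      simp [sq]
    have s3 : ((V * Vᵀ) * (U * Uᵀ)).trace = ∑ j, σ j ^ 2 := by
      rw [Matrix.trace_mul_comm]; exact s2
    rw [hexp, Matrix.trace_sub, Matrix.trace_sub, Matrix.trace_sub, s1, s2, s3, s4]
    ring
  -- sum forms
  have hsum1 : frobSq (V * Hhat - U) = 2 * ∑ j, (1 - σ j) := by
    rw [hF1, Finset.sum_sub_distrib]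
    simp [Finset.card_univ]
    ring
  have hsum2 : frobSq (U * Uᵀ - V * Vᵀ) = 2 * ∑ j, (1 - σ j ^ 2) := by
    rw [hF2, Finset.sum_sub_distrib]
    simp [Finset.card_univ]
    ring
  set S1 := ∑ j, (1 - σ j) with hS1def
  set S2 := ∑ j, (1 - σ j ^ 2) with hS2def
  have hS1nn : 0 ≤ S1 := Finset.sum_nonneg fun j _ => by linarith [hσle j]
  have hS2nn : 0 ≤ S2 := Finset.sum_nonneg fun j _ => by nlinarith [hσle j, hσ0 j]
  have hle1 : S2 ≤ 2 * S1 := by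
    rw [hS1def, hS2def, Finset.mul_sum]
    exact Finset.sum_le_sum fun j _ => by nlinarith [hσle j, hσ0 j]
  have h2e : (0 : ℝ) < 2 - ε ^ 2 := by nlinarith [hεnn, hlt]
  have hle2 : S1 * (2 - ε ^ 2) ≤ S2 := by
    rw [hS1def, hS2def, Finset.sum_mul]
    refine Finset.sum_le_sum fun j _ => ?_
    nlinarith [hsin j, hσ0 j, hσle j,
      mul_nonneg (sub_nonneg.2 (hσle j)) (sub_nonneg.2 (hsin j)),
      mul_nonneg (hσ0 j) (sq_nonneg (1 - σ j))]
  have hs2pos : (0 : ℝ) < Real.sqrt 2 := by positivity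
  constructor
  · rw [frob, frob, hsum1, hsum2]
    calc (1 / Real.sqrt 2) * Real.sqrt (2 * S2)
        = Real.sqrt S2 := by
          rw [Real.sqrt_mul (by norm_num : (0:ℝ) ≤ 2), one_div, ← mul_assoc,
            inv_mul_cancel₀ hs2pos.ne', one_mul]
      _ ≤ Real.sqrt (2 * S1) := Real.sqrt_le_sqrt (by linarith)
  · rw [frob, frob, hsum1, hsum2,
      le_div_iff₀ (Real.sqrt_pos.2 h2e),
      ← Real.sqrt_mul (by positivity : (0:ℝ) ≤ 2 * S1)]
    exact Real.sqrt_le_sqrt (by nlinarith)
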